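/- Let ω : ℝ^d → ℝⁿ be a linear map whose operator norm (from the Euclidean norm on ℝ^d to the Euclidean norm on ℝⁿ) is at most 1. Suppose a polyhedral 1-chain Z with ℝⁿ-coefficients consists of segments whose coefficient vector h_i satisfies ⟨ω(τ_i), h_i⟩ = ‖h_i‖ for the unit orientation τ_i of the segment (Euclidean norm on ℝⁿ). Then for every polyhedral 1-chain Z' with ℝⁿ-coefficients and the same boundary 0-chain, mass(Z) ≤ mass(Z'), where mass is the sum over segments of (Euclidean norm of the coefficient) × (segment length). In particular a calibrated chain is mass-minimizing even among chains with real (not just integer) coefficients. -/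

import Mathlib

open scoped Classical

lemma sum_inner_fiber {d n : ℕ}
    (ω : EuclideanSpace ℝ (Fin d) →ₗ[ℝ] EuclideanSpace ℝ (Fin n))
    {m : ℕ} (f : Fin m → EuclideanSpace ℝ (Fin d))
    (g : Fin m → EuclideanSpace ℝ (Fin n))
    (S : Finset (EuclideanSpace ℝ (Fin d))) (hf : ∀ i, f i ∈ S) :
    ∑ i, (inner ℝ (ω (f i)) (g i) : ℝ)
      = ∑ x ∈ S, (inner ℝ (ω x) (∑ i, if f i = x then g i else 0) : ℝ) := by
  have h1 : ∀ x : EuclideanSpace ℝ (Fin d),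
      (inner ℝ (ω x) (∑ i, if f i = x then g i else 0) : ℝ)
        = ∑ i, if f i = x then (inner ℝ (ω x) (g i) : ℝ) else 0 := by
    intro x
    rw [inner_sum]
    exact Finset.sum_congr rfl fun i _ => by split_ifs <;> simp
  have h2 : ∀ i, ∑ x ∈ S, (if f i = x then (inner ℝ (ω x) (g i) : ℝ) else 0)
      = (inner ℝ (ω (f i)) (g i) : ℝ) := by
    intro i
    rw [Finset.sum_eq_single_of_mem (f i) (hf i)]
    · simp
    · intro x _ hx
      simp [Ne.symm hx]
  calc ∑ i, (inner ℝ (ω (f i)) (g i) : ℝ)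
      = ∑ i, ∑ x ∈ S, (if f i = x then (inner ℝ (ω x) (g i) : ℝ) else 0) :=
        Finset.sum_congr rfl fun i _ => (h2 i).symm
    _ = ∑ x ∈ S, ∑ i, (if f i = x then (inner ℝ (ω x) (g i) : ℝ) else 0) :=
        Finset.sum_comm
    _ = ∑ x ∈ S, (inner ℝ (ω x) (∑ i, if f i = x then g i else 0) : ℝ) :=
        Finset.sum_congr rfl fun x _ => (h1 x).symm

theorem stmt18 {d n : ℕ}
    (ω : EuclideanSpace ℝ (Fin d) →ₗ[ℝ] EuclideanSpace ℝ (Fin n))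
    (hω : ∀ v, ‖ω v‖ ≤ ‖v‖)
    {m m' : ℕ}
    (a b : Fin m → EuclideanSpace ℝ (Fin d)) (h : Fin m → EuclideanSpace ℝ (Fin n))
    (a' b' : Fin m' → EuclideanSpace ℝ (Fin d)) (h' : Fin m' → EuclideanSpace ℝ (Fin n))
    (hne : ∀ i, b i ≠ a i)
    (hcal : ∀ i, (inner ℝ (ω (‖b i - a i‖⁻¹ • (b i - a i))) (h i) : ℝ) = ‖h i‖)
    (hbd : ∀ x : EuclideanSpace ℝ (Fin d),
      ((∑ i, if b i = x then h i else 0) - ∑ i, if a i = x then h i else 0)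
        = ((∑ k, if b' k = x then h' k else 0) - ∑ k, if a' k = x then h' k else 0)) :
    ∑ i, ‖h i‖ * ‖b i - a i‖ ≤ ∑ k, ‖h' k‖ * ‖b' k - a' k‖ := by
  -- Step 1: mass of Z equals ∑ ⟨ω(b i - a i), h i⟩
  have hmass : ∀ i, (inner ℝ (ω (b i - a i)) (h i) : ℝ) = ‖h i‖ * ‖b i - a i‖ := by
    intro i
    have hn : ‖b i - a i‖ ≠ 0 := by
      simpa [sub_eq_zero] using hne i
    have h0 := hcal i
    rw [map_smul, real_inner_smul_left, inv_mul_eq_iff_eq_mul₀ hn] at h0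
    rw [h0, mul_comm]
  -- the finite set of all endpoints
  set S : Finset (EuclideanSpace ℝ (Fin d)) :=
    (Finset.univ.image a ∪ Finset.univ.image b) ∪
    (Finset.univ.image a' ∪ Finset.univ.image b') with hS
  have haS : ∀ i, a i ∈ S := fun i => by simp [hS]
  have hbS : ∀ i, b i ∈ S := fun i => by simp [hS]
  have ha'S : ∀ k, a' k ∈ S := fun k => by simp [hS]
  have hb'S : ∀ k, b' k ∈ S := fun k => by simp [hS]
  -- Step 2: Stokes, the inner-product sum depends only on boundary
  have key : ∑ i, (inner ℝ (ω (b i - a i)) (h i) : ℝ)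
      = ∑ k, (inner ℝ (ω (b' k - a' k)) (h' k) : ℝ) := by
    have expand : ∀ {M : ℕ} (p q : Fin M → EuclideanSpace ℝ (Fin d))
        (g : Fin M → EuclideanSpace ℝ (Fin n)),
        (∀ i, p i ∈ S) → (∀ i, q i ∈ S) →
        ∑ i, (inner ℝ (ω (p i - q i)) (g i) : ℝ)
          = ∑ x ∈ S, (inner ℝ (ω x)
              ((∑ i, if p i = x then g i else 0) - ∑ i, if q i = x then g i else 0) : ℝ) := by
      intro M p q g hp hq
      have : ∀ i, (inner ℝ (ω (p i - q i)) (g i) : ℝ)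
          = (inner ℝ (ω (p i)) (g i) : ℝ) - (inner ℝ (ω (q i)) (g i) : ℝ) := by
        intro i; rw [map_sub, inner_sub_left]
      rw [Finset.sum_congr rfl (fun i _ => this i), Finset.sum_sub_distrib,
        sum_inner_fiber ω p g S hp, sum_inner_fiber ω q g S hq,
        ← Finset.sum_sub_distrib]
      apply Finset.sum_congr rfl
      intro x _
      rw [inner_sub_right]
    rw [expand b a h hbS haS, expand b' a' h' hb'S ha'S]
    apply Finset.sum_congr rfl
    intro x _
    rw [hbd x]
  -- Step 3: conclude
  calc ∑ i, ‖h i‖ * ‖b i - a i‖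
      = ∑ i, (inner ℝ (ω (b i - a i)) (h i) : ℝ) := by
        exact (Finset.sum_congr rfl fun i _ => (hmass i).symm)
    _ = ∑ k, (inner ℝ (ω (b' k - a' k)) (h' k) : ℝ) := key
    _ ≤ ∑ k, ‖h' k‖ * ‖b' k - a' k‖ := by
        apply Finset.sum_le_sum
        intro k _
        calc (inner ℝ (ω (b' k - a' k)) (h' k) : ℝ)
            ≤ ‖ω (b' k - a' k)‖ * ‖h' k‖ := real_inner_le_norm _ _
          _ ≤ ‖b' k - a' k‖ * ‖h' k‖ := by
              apply mul_le_mul_of_nonneg_right (hω _) (norm_nonneg _)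
          _ = ‖h' k‖ * ‖b' k - a' k‖ := mul_comm _ _
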